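/- Fix 0 < r < 1 and a 0-1 vector x* ∈ {0,1}^n. The number of vectors (a_1,...,a_n) ∈ {1,...,M}^n satisfying Σ_{j=1}^n a_j x*_j = ⌊r Σ_{j=1}^n a_j⌋ is at most k(r)·M^{n-1}, where k(r) = ⌈max{1/r, 1/(1-r)}⌉. -/

import Mathlib

/-- For a fixed 0-1 vector `x*`, the number of coefficient vectors `a ∈ {1,…,M}ⁿ` with
`∑ aⱼ x*ⱼ = ⌊r ∑ aⱼ⌋` is at most `⌈max (1/r) (1/(1-r))⌉ · M^(n-1)`. -/
theorem stmt_5 (n M : ℕ) (hn : 1 ≤ n) (hM : 1 ≤ M) (r : ℝ) (hr0 : 0 < r) (hr1 : r < 1)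
    (x : Fin n → ℝ) (hx : ∀ j, x j = 0 ∨ x j = 1) :
    Set.ncard {a : Fin n → ℕ | (∀ j, 1 ≤ a j ∧ a j ≤ M) ∧
        (∑ j, (a j : ℝ) * x j) = (⌊r * ∑ j, (a j : ℝ)⌋ : ℝ)}
      ≤ ⌈max (1 / r) (1 / (1 - r))⌉₊ * M ^ (n - 1) := by
  classical
  have hr1' : (0:ℝ) < 1 - r := by linarith
  set k := ⌈max (1 / r) (1 / (1 - r))⌉₊ with hkdef
  have hk1 : 1 / r ≤ (k : ℝ) := le_trans (le_max_left _ _) (Nat.le_ceil _)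
  have hk2 : 1 / (1 - r) ≤ (k : ℝ) := le_trans (le_max_right _ _) (Nat.le_ceil _)
  obtain ⟨j0, hj0⟩ : ∃ j0 : Fin n, x j0 = 1 ∨ ∀ j, x j = 0 := by
    by_cases h : ∃ j, x j = 1
    · obtain ⟨j, hj⟩ := h; exact ⟨j, Or.inl hj⟩
    · exact ⟨⟨0, hn⟩, Or.inr fun j => (hx j).resolve_right fun h1 => h ⟨j, h1⟩⟩
  set s : Finset (Fin n → ℕ) :=
    (Fintype.piFinset fun _ => Finset.Icc 1 M).filter
      (fun a => (∑ j, (a j : ℝ) * x j) = (⌊r * ∑ j, (a j : ℝ)⌋ : ℝ)) with hs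
  have hset : {a : Fin n → ℕ | (∀ j, 1 ≤ a j ∧ a j ≤ M) ∧
      (∑ j, (a j : ℝ) * x j) = (⌊r * ∑ j, (a j : ℝ)⌋ : ℝ)} = ↑s := by
    ext a
    simp [hs, Fintype.mem_piFinset, Finset.mem_Icc]
  rw [hset, Set.ncard_coe_finset]
  -- the restriction map
  set ρ : (Fin n → ℕ) → ({j : Fin n // j ≠ j0} → ℕ) := fun a j => a j.1 with hρ
  have hsplit : ∀ (g : Fin n → ℝ), ∑ j, g j = g j0 + ∑ j : {j : Fin n // j ≠ j0}, g j.1 := by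
    intro g
    rw [Fintype.sum_eq_add_sum_compl j0 g]
    congr 1
    exact (Finset.sum_subtype (p := fun j => j ≠ j0) ({j0}ᶜ : Finset (Fin n)) (fun j => by simp) g)
  -- fibers over t := piFinset
  have hmaps : ∀ a ∈ s, ρ a ∈ Fintype.piFinset fun _ : {j : Fin n // j ≠ j0} => Finset.Icc 1 M := by
    intro a ha
    simp only [hs, Finset.mem_filter, Fintype.mem_piFinset] at ha
    exact Fintype.mem_piFinset.2 fun j => ha.1 j.1
  have hfiber : ∀ b ∈ (Fintype.piFinset fun _ : {j : Fin n // j ≠ j0} => Finset.Icc 1 M),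
      (s.filter fun a => ρ a = b).card ≤ k := by
    intro b _
    set D : ℝ := ∑ j : {j : Fin n // j ≠ j0}, (b j : ℝ) with hD
    set C : ℝ := ∑ j : {j : Fin n // j ≠ j0}, (b j : ℝ) * x j.1 with hC
    -- each a in the fiber satisfies the floor equation with sums rewritten in terms of a j0
    have hcond : ∀ a ∈ s.filter fun a => ρ a = b,
        ((a j0 : ℝ) * x j0 + C) = (⌊r * ((a j0 : ℝ) + D)⌋ : ℝ) ∧ 1 ≤ a j0 := by
      intro a ha
      simp only [Finset.mem_filter, hs] at ha
      obtain ⟨⟨hmem, heq⟩, hb⟩ := ha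
      have hbj : ∀ j : {j : Fin n // j ≠ j0}, a j.1 = b j := fun j => congrFun hb j
      have h1 : (∑ j, (a j : ℝ) * x j) = (a j0 : ℝ) * x j0 + C := by
        rw [hsplit (fun j => (a j : ℝ) * x j)]
        congr 1
        exact Finset.sum_congr rfl fun j _ => by rw [hbj j]
      have h2 : (∑ j, (a j : ℝ)) = (a j0 : ℝ) + D := by
        rw [hsplit (fun j => (a j : ℝ))]
        congr 1
        exact Finset.sum_congr rfl fun j _ => by rw [hbj j]
      refine ⟨by rw [← h1, ← h2]; exact heq, ?_⟩
      exact (Finset.mem_Icc.1 (Fintype.mem_piFinset.1 hmem j0)).1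
    have hD0 : 0 ≤ D := Finset.sum_nonneg fun j _ => by positivity
    -- bound the fiber by injecting into an interval of integers
    rcases hj0 with hx1 | hx0
    · -- case x j0 = 1
      set u : ℝ := (r * D - C - 1) / (1 - r) with hu
      have hsub : ∀ a ∈ s.filter fun a => ρ a = b,
          ((a j0 : ℤ)) ∈ Finset.Ioc ⌊u⌋ ⌊u + 1/(1-r)⌋ := by
        intro a ha
        obtain ⟨heq, -⟩ := hcond a ha
        rw [hx1, mul_one] at heq
        have t_def : True := trivial
        have hfl : (⌊r * ((a j0 : ℝ) + D)⌋ : ℝ) = (a j0 : ℝ) + C := heq.symm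
        have hlow : (a j0 : ℝ) + C ≤ r * ((a j0 : ℝ) + D) := by
          rw [← hfl]; exact Int.floor_le _
        have hhigh : r * ((a j0 : ℝ) + D) < (a j0 : ℝ) + C + 1 := by
          rw [← hfl]
          have := Int.lt_floor_add_one (r * ((a j0 : ℝ) + D))
          linarith
        have hut : u < (a j0 : ℝ) := by
          rw [hu, div_lt_iff₀ hr1']
          nlinarith
        have htu : (a j0 : ℝ) ≤ u + 1/(1-r) := by
          have huv : u + 1/(1-r) = (r * D - C) / (1 - r) := by
            rw [hu]; field_simp; ring
          rw [huv, le_div_iff₀ hr1']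
          nlinarith
        simp only [Finset.mem_Ioc]
        constructor
        · have h1 : (⌊u⌋ : ℝ) < (a j0 : ℝ) := lt_of_le_of_lt (Int.floor_le u) hut
          exact_mod_cast h1
        · exact Int.le_floor.2 (by exact_mod_cast htu)
      calc (s.filter fun a => ρ a = b).card
          ≤ (Finset.Ioc ⌊u⌋ ⌊u + 1/(1-r)⌋).card := by
            apply Finset.card_le_card_of_injOn (fun a => (a j0 : ℤ)) (fun ⦃a⦄ ha => hsub a ha)
            intro a1 h1 a2 h2 he
            have hb1 : ρ a1 = b := (Finset.mem_filter.1 h1).2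
            have hb2 : ρ a2 = b := (Finset.mem_filter.1 h2).2
            funext j
            by_cases hj : j = j0
            · subst hj
              have he' : (a1 j : ℤ) = (a2 j : ℤ) := he
              exact_mod_cast he'
            · exact congrFun (hb1.trans hb2.symm) ⟨j, hj⟩
        _ ≤ k := by
            rw [Int.card_Ioc]
            have hle : ⌊u + 1/(1-r)⌋ ≤ ⌊u⌋ + k := by
              have : u + 1/(1-r) ≤ u + (k:ℝ) := by linarith
              calc ⌊u + 1/(1-r)⌋ ≤ ⌊u + (k:ℝ)⌋ := Int.floor_le_floor this
                _ = ⌊u⌋ + k := by rw [← Int.floor_add_intCast]; norm_num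
            omega
    · -- case x ≡ 0
      have hsub : ∀ a ∈ s.filter fun a => ρ a = b,
          ((a j0 : ℤ)) ∈ Finset.Ioc 0 (⌈1/r⌉ - 1) := by
        intro a ha
        obtain ⟨heq, h1⟩ := hcond a ha
        rw [hx0 j0, mul_zero, zero_add] at heq
        have hC0 : C = 0 := by
          rw [hC]
          exact Finset.sum_eq_zero fun j _ => by rw [hx0 j.1, mul_zero]
        rw [hC0] at heq
        have hfl : ⌊r * ((a j0 : ℝ) + D)⌋ = 0 := by exact_mod_cast heq.symm
        have hlt : r * ((a j0 : ℝ) + D) < 1 := by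
          have := (Int.floor_eq_zero_iff.1 hfl).2
          simpa using this
        have ht1 : (1:ℝ) ≤ (a j0 : ℝ) := by exact_mod_cast h1
        have htr : (a j0 : ℝ) < 1 / r := by
          rw [lt_div_iff₀ hr0]
          nlinarith
        simp only [Finset.mem_Ioc]
        refine ⟨by exact_mod_cast h1, ?_⟩
        have : (a j0 : ℤ) < ⌈1/r⌉ := Int.lt_ceil.2 (by exact_mod_cast htr)
        omega
      calc (s.filter fun a => ρ a = b).card
          ≤ (Finset.Ioc (0:ℤ) (⌈1/r⌉ - 1)).card := by
            apply Finset.card_le_card_of_injOn (fun a => (a j0 : ℤ)) (fun ⦃a⦄ ha => hsub a ha)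
            intro a1 h1 a2 h2 he
            have hb1 : ρ a1 = b := (Finset.mem_filter.1 h1).2
            have hb2 : ρ a2 = b := (Finset.mem_filter.1 h2).2
            funext j
            by_cases hj : j = j0
            · subst hj
              have he' : (a1 j : ℤ) = (a2 j : ℤ) := he
              exact_mod_cast he'
            · exact congrFun (hb1.trans hb2.symm) ⟨j, hj⟩
        _ ≤ k := by
            rw [Int.card_Ioc]
            have : ⌈1/r⌉ ≤ (k:ℤ) := Int.ceil_le.2 (by exact_mod_cast hk1)
            omega
  have hcard := Finset.card_le_mul_card_image_of_maps_to hmaps k hfiber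
  have hcsub : Fintype.card {j : Fin n // j ≠ j0} = n - 1 := by
    simp [Fintype.card_subtype_compl]
  have hpi : (Fintype.piFinset fun _ : {j : Fin n // j ≠ j0} => Finset.Icc 1 M).card
      = M ^ (n - 1) := by
    rw [Fintype.card_piFinset, Nat.card_Icc, Finset.prod_const, Finset.card_univ, hcsub]
    norm_num
  calc s.card ≤ k * (Fintype.piFinset fun _ : {j : Fin n // j ≠ j0} => Finset.Icc 1 M).card := hcard
    _ = k * M ^ (n - 1) := by rw [hpi]
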